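/- Let N ≥ 1, let ε ≥ 0, let σ⁰ be a density matrix on ℂ^N, and for each z ∈ Fin N let σ_z be a density matrix on ℂ^N such that the trace norm satisfies ‖σ⁰ − σ_z‖₁ ≤ ε. Then the average diagonal overlap satisfies (1/N) · Σ_{z ∈ Fin N} Re((σ_z)_{z z}) ≤ 1/N + ε. -/

import Mathlib

open Matrix
open scoped ComplexOrder BigOperators

lemma diag_re_le {n : ℕ} {A : Matrix (Fin n) (Fin n) ℂ} (hA : A.IsHermitian) (z : Fin n) :
    |(A z z).re| ≤ ∑ i, |hA.eigenvalues i| := by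
  set U : Matrix (Fin n) (Fin n) ℂ := (hA.eigenvectorUnitary : Matrix (Fin n) (Fin n) ℂ) with hUdef
  have hU : U * star U = 1 := Matrix.mem_unitaryGroup_iff.mp hA.eigenvectorUnitary.2
  have hdiag : A z z = ∑ i, (hA.eigenvalues i : ℂ) * (U z i * (starRingEnd ℂ) (U z i)) := by
    conv_lhs => rw [hA.spectral_theorem, Unitary.conjStarAlgAut_apply]
    simp only [Matrix.mul_apply, Matrix.diagonal_apply, Matrix.star_apply, Finset.sum_mul]
    rw [Finset.sum_comm]
    apply Finset.sum_congr rfl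
    intro i _
    simp only [hUdef, Matrix.IsHermitian.eigenvectorUnitary_apply, Finset.mul_sum]
    simp [Finset.mul_sum, mul_comm, mul_assoc, mul_left_comm]
  have hre : (A z z).re = ∑ i, hA.eigenvalues i * ‖U z i‖ ^ 2 := by
    rw [hdiag, Complex.re_sum]
    apply Finset.sum_congr rfl
    intro i _
    rw [Complex.mul_conj, ← Complex.ofReal_mul]
    rw [Complex.ofReal_re, Complex.normSq_eq_norm_sq]
  have hnorm : ∑ i, ‖U z i‖ ^ 2 = 1 := by
    have h1 : (∑ i, U z i * (starRingEnd ℂ) (U z i)) = 1 := by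
      simpa [Matrix.mul_apply, Matrix.star_apply, Matrix.one_apply] using
        congrArg (fun M => M z z) hU
    have h2 := congrArg Complex.re h1
    rw [Complex.re_sum] at h2
    simp only [Complex.mul_conj, Complex.ofReal_re, Complex.one_re] at h2
    rw [← h2]
    apply Finset.sum_congr rfl
    intro i _
    rw [Complex.normSq_eq_norm_sq]
  rw [hre]
  calc |∑ i, hA.eigenvalues i * ‖U z i‖ ^ 2| ≤ ∑ i, |hA.eigenvalues i * ‖U z i‖ ^ 2| :=
        Finset.abs_sum_le_sum_abs _ _
    _ = ∑ i, |hA.eigenvalues i| * ‖U z i‖ ^ 2 := by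
        apply Finset.sum_congr rfl; intro i _
        rw [abs_mul, abs_of_nonneg (sq_nonneg (‖U z i‖))]
    _ ≤ ∑ i, |hA.eigenvalues i| * 1 := by
        apply Finset.sum_le_sum; intro i _
        apply mul_le_mul_of_nonneg_left _ (abs_nonneg _)
        calc ‖U z i‖ ^ 2 ≤ ∑ j, ‖U z j‖ ^ 2 :=
              Finset.single_le_sum (f := fun j => ‖U z j‖ ^ 2)
                (fun j _ => sq_nonneg _) (Finset.mem_univ i)
          _ = 1 := hnorm
    _ = ∑ i, |hA.eigenvalues i| := by simp


theorem average_diagonal_overlap_le (N : ℕ) (hN : 1 ≤ N) (ε : ℝ) (hε : 0 ≤ ε)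
    (σ₀ : Matrix (Fin N) (Fin N) ℂ) (hσ₀ : σ₀.PosSemidef) (hσ₀tr : σ₀.trace = 1)
    (σ : Fin N → Matrix (Fin N) (Fin N) ℂ)
    (hσ : ∀ z, (σ z).PosSemidef) (hσtr : ∀ z, (σ z).trace = 1)
    (hH : ∀ z, (σ₀ - σ z).IsHermitian)
    (hclose : ∀ z, ∑ i, |(hH z).eigenvalues i| ≤ ε) :
    (1 / N : ℝ) * ∑ z, ((σ z) z z).re ≤ 1 / N + ε := by
  have hNpos : (0 : ℝ) < N := by exact_mod_cast hN
  have key : ∀ z, ((σ z) z z).re ≤ (σ₀ z z).re + ε := by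
    intro z
    have h1 : |((σ₀ - σ z) z z).re| ≤ ∑ i, |(hH z).eigenvalues i| := diag_re_le (hH z) z
    have h2 : |(σ₀ z z).re - ((σ z) z z).re| ≤ ε := by
      have := h1.trans (hclose z)
      simpa [Matrix.sub_apply] using this
    have := (abs_le.mp h2).1
    linarith
  have htr : ∑ z, (σ₀ z z).re = 1 := by
    have := congrArg Complex.re hσ₀tr
    simpa [Matrix.trace, Matrix.diag, Complex.re_sum] using this
  have hsum : ∑ z, ((σ z) z z).re ≤ 1 + N * ε := by
    calc ∑ z, ((σ z) z z).re ≤ ∑ z, ((σ₀ z z).re + ε) :=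
          Finset.sum_le_sum fun z _ => key z
      _ = 1 + N * ε := by
          rw [Finset.sum_add_distrib, htr]
          simp [mul_comm]
  calc (1 / N : ℝ) * ∑ z, ((σ z) z z).re ≤ (1 / N : ℝ) * (1 + N * ε) := by
        apply mul_le_mul_of_nonneg_left hsum
        positivity
    _ = 1 / N + ε := by field_simp
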